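/- Let p be a prime, let Z be a Zariski closed subset of ℂ_p^n and let Z' be a Zariski closed subset of ℂ_p^m. Then: (a) there exists a constant c ≥ 1, depending only on Z and Z', such that for all x ∈ 𝒪_p^n and y ∈ 𝒪_p^m one has dist_p((x,y), Z × Z') ≤ c · max{dist_p(x,Z), dist_p(y,Z')}; and (b) for all x ∈ 𝒪_p^n and y ∈ 𝒪_p^m one has max{dist_p(x,Z), dist_p(y,Z')} ≤ dist_p((x,y), Z × Z'). -/

import Mathlib

/-- A Zariski closed subset of `C^n`: the common zero set of an ideal of polynomials. -/
def IsZariskiClosed {C : Type*} [CommRing C] {n : ℕ} (Z : Set (Fin n → C)) : Prop :=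
  ∃ I : Ideal (MvPolynomial (Fin n) C),
    Z = {x | ∀ f ∈ I, MvPolynomial.eval x f = 0}

/-- The `p`-adic distance from a point `x` to a set `Z ⊆ C^n`:
`dist_p(x,Z) = sup {‖f(x)‖ : f vanishes identically on Z and all coefficients of f
have norm at most 1}`. -/
noncomputable def pDist {C : Type*} [NormedField C] {n : ℕ}
    (x : Fin n → C) (Z : Set (Fin n → C)) : ℝ :=
  sSup {r : ℝ | ∃ f : MvPolynomial (Fin n) C,
    (∀ y ∈ Z, MvPolynomial.eval y f = 0) ∧ (∀ m, ‖f.coeff m‖ ≤ 1) ∧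
    r = ‖MvPolynomial.eval x f‖}

/-- The product `Z × Z' ⊆ C^{n+m}` of `Z ⊆ C^n` and `Z' ⊆ C^m`. -/
def setProd {C : Type*} {n m : ℕ} (Z : Set (Fin n → C)) (Z' : Set (Fin m → C)) :
    Set (Fin (n + m) → C) :=
  {z | (fun i => z (Fin.castAdd m i)) ∈ Z ∧ (fun j => z (Fin.natAdd n j)) ∈ Z'}

namespace Stmt8Aux

/-- The set whose supremum defines `pDist`. -/
def pdistSet {C : Type*} [NormedField C] {n : ℕ} (x : Fin n → C) (Z : Set (Fin n → C)) :
    Set ℝ :=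
  {r : ℝ | ∃ f : MvPolynomial (Fin n) C,
    (∀ y ∈ Z, MvPolynomial.eval y f = 0) ∧ (∀ m, ‖f.coeff m‖ ≤ 1) ∧
    r = ‖MvPolynomial.eval x f‖}

variable {K : Type*} [NormedField K] [IsUltrametricDist K]

lemma norm_finset_sum_le {ι : Type*} (s : Finset ι) (g : ι → K) {M : ℝ} (hM : 0 ≤ M)
    (h : ∀ i ∈ s, ‖g i‖ ≤ M) : ‖∑ i ∈ s, g i‖ ≤ M :=
  IsUltrametricDist.norm_sum_le_of_forall_le_of_nonneg hM h

lemma norm_eval_le {σ : Type*} [Fintype σ] (g : MvPolynomial σ K) (x : σ → K)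
    (hx : ∀ i, ‖x i‖ ≤ 1) {M : ℝ} (hM : ∀ d, ‖g.coeff d‖ ≤ M) :
    ‖MvPolynomial.eval x g‖ ≤ M := by
  have hM0 : 0 ≤ M := le_trans (norm_nonneg _) (hM 0)
  rw [MvPolynomial.eval_eq']
  refine norm_finset_sum_le _ _ hM0 fun d _ => ?_
  rw [norm_mul]
  calc ‖g.coeff d‖ * ‖∏ i, x i ^ d i‖ ≤ M * 1 := by
        refine mul_le_mul (hM d) ?_ (norm_nonneg _) hM0
        rw [norm_prod]
        refine Finset.prod_le_one (fun i _ => norm_nonneg _) fun i _ => ?_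
        rw [norm_pow]
        exact pow_le_one₀ (norm_nonneg _) (hx i)
    _ = M := mul_one M

lemma zero_mem_pdistSet {n : ℕ} (x : Fin n → K) (Z : Set (Fin n → K)) :
    (0 : ℝ) ∈ pdistSet x Z :=
  ⟨0, fun _ _ => by simp, fun m => by simp, by simp⟩

lemma bddAbove_pdistSet {n : ℕ} {x : Fin n → K} (hx : ∀ i, ‖x i‖ ≤ 1) (Z : Set (Fin n → K)) :
    BddAbove (pdistSet x Z) := by
  refine ⟨1, ?_⟩
  rintro r ⟨f, -, hc, rfl⟩
  exact norm_eval_le f x hx hc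

lemma pdist_nonneg {n : ℕ} (x : Fin n → K) (Z : Set (Fin n → K)) :
    0 ≤ sSup (pdistSet x Z) :=
  Real.sSup_nonneg (by rintro r ⟨f, -, -, rfl⟩; exact norm_nonneg _)

lemma le_pdist_of_mem {n : ℕ} {x : Fin n → K} (hx : ∀ i, ‖x i‖ ≤ 1)
    {Z : Set (Fin n → K)} {r : ℝ} (hr : r ∈ pdistSet x Z) : r ≤ sSup (pdistSet x Z) :=
  le_csSup (bddAbove_pdistSet hx Z) hr

/-- If `g` vanishes on `Z` and all its coefficients have norm `≤ M`, then
`‖g(x)‖ ≤ M · pDist x Z` for integral `x`. -/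
lemma norm_eval_le_mul_pdist {n : ℕ} {Z : Set (Fin n → K)} (g : MvPolynomial (Fin n) K)
    (hg : ∀ a ∈ Z, MvPolynomial.eval a g = 0) {M : ℝ} (hM : ∀ d, ‖g.coeff d‖ ≤ M)
    {x : Fin n → K} (hx : ∀ i, ‖x i‖ ≤ 1) :
    ‖MvPolynomial.eval x g‖ ≤ M * sSup (pdistSet x Z) := by
  have hM0 : 0 ≤ M := le_trans (norm_nonneg _) (hM 0)
  by_cases hg0 : g = 0
  · simp only [hg0, map_zero, norm_zero]
    exact mul_nonneg hM0 (pdist_nonneg x Z)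
  · have hsupp : g.support.Nonempty := by
      rwa [Finset.nonempty_iff_ne_empty, ne_eq, MvPolynomial.support_eq_empty]
    obtain ⟨d₀, hd₀, hmax⟩ := Finset.exists_max_image g.support (fun d => ‖g.coeff d‖) hsupp
    have hc0 : g.coeff d₀ ≠ 0 := MvPolynomial.mem_support_iff.mp hd₀
    have hcn : (0:ℝ) < ‖g.coeff d₀‖ := norm_pos_iff.mpr hc0
    set c := g.coeff d₀ with hc
    have hmem : ‖MvPolynomial.eval x (c⁻¹ • g)‖ ∈ pdistSet x Z := by
      refine ⟨c⁻¹ • g, fun a ha => ?_, fun d => ?_, rfl⟩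
      · rw [MvPolynomial.smul_eval, hg a ha, mul_zero]
      · rw [MvPolynomial.coeff_smul, smul_eq_mul, norm_mul, norm_inv]
        rw [inv_mul_le_iff₀ hcn, mul_one]
        by_cases hd : d ∈ g.support
        · exact hmax d hd
        · simp [MvPolynomial.notMem_support_iff.mp hd]
    have h1 : ‖MvPolynomial.eval x g‖ = ‖c‖ * ‖MvPolynomial.eval x (c⁻¹ • g)‖ := by
      rw [MvPolynomial.smul_eval, norm_mul, norm_inv, ← mul_assoc,
        mul_inv_cancel₀ (by positivity), one_mul]
    rw [h1]
    have := le_pdist_of_mem hx hmem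
    calc ‖c‖ * ‖MvPolynomial.eval x (c⁻¹ • g)‖ ≤ ‖c‖ * sSup (pdistSet x Z) := by
          exact mul_le_mul_of_nonneg_left this (norm_nonneg _)
      _ ≤ M * sSup (pdistSet x Z) :=
          mul_le_mul_of_nonneg_right (hM d₀) (pdist_nonneg x Z)


end Stmt8Aux

namespace Stmt8Aux
open Module Submodule Set
lemma pi_ultra {ι : Type*} [Fintype ι] {F : ι → Type*} [∀ i, SeminormedAddCommGroup (F i)]
    [∀ i, IsUltrametricDist (F i)] : IsUltrametricDist (∀ i, F i) := by
  apply IsUltrametricDist.isUltrametricDist_of_forall_norm_add_le_max_norm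
  intro x y
  rw [pi_norm_le_iff_of_nonneg (le_max_of_le_left (norm_nonneg _))]
  intro i
  refine (IsUltrametricDist.norm_add_le_max _ _).trans ?_
  exact max_le_max (norm_le_pi_norm _ i) (norm_le_pi_norm _ i)

variable {𝕜 E : Type*} [NontriviallyNormedField 𝕜] [CompleteSpace 𝕜]
  [NormedAddCommGroup E] [NormedSpace 𝕜 E] [IsUltrametricDist E]

lemma norm_sub_le_max' (a b : E) : ‖a - b‖ ≤ max ‖a‖ ‖b‖ := by
  rw [sub_eq_add_neg]
  refine (IsUltrametricDist.norm_add_le_max _ _).trans ?_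
  rw [norm_neg]

lemma exists_functional (V : Submodule 𝕜 E) (W'' : Submodule 𝕜 V) (h : W'' ≠ ⊤)
    [FiniteDimensional 𝕜 V] :
    ∃ (ψ : V →ₗ[𝕜] 𝕜) (v : V), ψ v ≠ 0 ∧ W'' ≤ LinearMap.ker ψ := by
  haveI : Nontrivial (V ⧸ W'') := Submodule.Quotient.nontrivial_iff.mpr h
  have hpos : 0 < Module.finrank 𝕜 (V ⧸ W'') := Module.finrank_pos
  set b := Module.finBasis 𝕜 (V ⧸ W'') with hb
  set i0 : Fin (Module.finrank 𝕜 (V ⧸ W'')) := ⟨0, hpos⟩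
  set φ := b.coord i0 with hφ
  obtain ⟨v, hv⟩ := W''.mkQ_surjective (b i0)
  refine ⟨φ.comp W''.mkQ, v, ?_, ?_⟩
  · simp only [LinearMap.comp_apply, hv, hφ, Basis.coord_apply, Basis.repr_self,
      Finsupp.single_eq_same]
    exact one_ne_zero
  · intro w hw
    simp only [LinearMap.mem_ker, LinearMap.comp_apply]
    have : W''.mkQ w = 0 := by
      rwa [Submodule.mkQ_apply, Submodule.Quotient.mk_eq_zero]
    rw [this, map_zero]


lemma extend_step (t : ℝ) (ht0 : 0 < t) (ht1 : t < 1)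
    (V V₀ : Submodule 𝕜 E) (hV₀V : V₀ ≤ V) (hfd₀ : FiniteDimensional 𝕜 V₀)
    (vE : E) (hvV : vE ∈ V) (hvV₀ : vE ∉ V₀)
    (hVspan : ∀ u ∈ V, ∃ c : 𝕜, u - c • vE ∈ V₀)
    (k₀ : ℕ) (e₀ : Fin k₀ → E) (hmem₀ : ∀ i, e₀ i ∈ V₀)
    (hspanV₀ : V₀ ≤ Submodule.span 𝕜 (Set.range e₀))
    (horth₀ : ∀ μ : Fin k₀ → 𝕜, ∀ i, Real.sqrt t * (‖μ i‖ * ‖e₀ i‖) ≤ ‖∑ j, μ j • e₀ j‖) :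
    ∃ w : E, w ≠ 0 ∧ w ∈ V ∧
      V ≤ Submodule.span 𝕜 (Set.range (Fin.snoc e₀ w : Fin (k₀ + 1) → E)) ∧
      (∀ μ : Fin (k₀ + 1) → 𝕜, ∀ i,
        t * (‖μ i‖ * ‖(Fin.snoc e₀ w : Fin (k₀ + 1) → E) i‖) ≤
          ‖∑ j, μ j • (Fin.snoc e₀ w : Fin (k₀ + 1) → E) j‖) := by
  have hts : Real.sqrt t * Real.sqrt t = t := Real.mul_self_sqrt ht0.le
  have ht0' : 0 < Real.sqrt t := Real.sqrt_pos.mpr ht0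
  have ht1' : Real.sqrt t < 1 := by
    by_contra hc
    push_neg at hc
    nlinarith
  have htle : t ≤ Real.sqrt t := by nlinarith
  haveI := hfd₀
  have hclosed : IsClosed (V₀ : Set E) := Submodule.closed_of_finiteDimensional V₀
  have hne : (V₀ : Set E).Nonempty := ⟨0, V₀.zero_mem⟩
  set δ := Metric.infDist vE (V₀ : Set E) with hδ
  have hδpos : 0 < δ := (hclosed.notMem_iff_infDist_pos hne).mp hvV₀
  have hlt : δ < δ / Real.sqrt t := by
    rw [lt_div_iff₀ ht0']
    nlinarith
  obtain ⟨d₀, hd₀V₀, hdist⟩ := (Metric.infDist_lt_iff hne).mp hlt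
  set w := vE - d₀ with hw
  have hwnorm : ‖w‖ < δ / Real.sqrt t := by rwa [hw, ← dist_eq_norm]
  have hδw : δ ≤ ‖w‖ := by
    rw [hw, ← dist_eq_norm]
    exact Metric.infDist_le_dist_of_mem hd₀V₀
  have hw0 : w ≠ 0 := by
    intro h
    rw [h, norm_zero] at hδw
    linarith
  have hwV : w ∈ V := V.sub_mem hvV (hV₀V hd₀V₀)
  have hkey : ∀ (μ : 𝕜) (u : E), u ∈ V₀ → Real.sqrt t * (‖μ‖ * ‖w‖) ≤ ‖μ • w + u‖ := by
    intro μ u hu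
    rcases eq_or_ne μ 0 with rfl | hμ
    · simp only [norm_zero, zero_mul, mul_zero, zero_smul, zero_add]
      positivity
    · have h1 : μ • w + u = μ • (w + μ⁻¹ • u) := by
        rw [smul_add, smul_inv_smul₀ hμ]
      rw [h1, norm_smul]
      have h2 : δ ≤ ‖w + μ⁻¹ • u‖ := by
        have hmem : d₀ - μ⁻¹ • u ∈ V₀ := V₀.sub_mem hd₀V₀ (V₀.smul_mem _ hu)
        have h3 := Metric.infDist_le_dist_of_mem (x := vE) hmem
        rw [dist_eq_norm] at h3
        have h4 : vE - (d₀ - μ⁻¹ • u) = w + μ⁻¹ • u := by rw [hw]; abel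
        rw [h4] at h3
        exact h3
      have h3 : Real.sqrt t * ‖w‖ ≤ δ := by
        rw [lt_div_iff₀ ht0'] at hwnorm
        nlinarith
      calc Real.sqrt t * (‖μ‖ * ‖w‖) = ‖μ‖ * (Real.sqrt t * ‖w‖) := by ring
        _ ≤ ‖μ‖ * δ := mul_le_mul_of_nonneg_left h3 (norm_nonneg μ)
        _ ≤ ‖μ‖ * ‖w + μ⁻¹ • u‖ := mul_le_mul_of_nonneg_left h2 (norm_nonneg μ)
  refine ⟨w, hw0, hwV, ?_, ?_⟩
  · -- spanning
    have hrange : Set.range e₀ ⊆ Set.range (Fin.snoc e₀ w : Fin (k₀ + 1) → E) := by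
      rintro z ⟨j, rfl⟩
      exact ⟨j.castSucc, by simp⟩
    have hV₀span : V₀ ≤ Submodule.span 𝕜 (Set.range (Fin.snoc e₀ w : Fin (k₀ + 1) → E)) :=
      hspanV₀.trans (Submodule.span_mono hrange)
    have hwspan : w ∈ Submodule.span 𝕜 (Set.range (Fin.snoc e₀ w : Fin (k₀ + 1) → E)) :=
      Submodule.subset_span ⟨Fin.last k₀, by simp⟩
    have hvspan : vE ∈ Submodule.span 𝕜 (Set.range (Fin.snoc e₀ w : Fin (k₀ + 1) → E)) := by
      have : vE = w + d₀ := by rw [hw]; abel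
      rw [this]
      exact Submodule.add_mem _ hwspan (hV₀span hd₀V₀)
    intro u hu
    obtain ⟨c, hc⟩ := hVspan u hu
    have : u = (u - c • vE) + c • vE := by abel
    rw [this]
    exact Submodule.add_mem _ (hV₀span hc) (Submodule.smul_mem _ _ hvspan)
  · -- orthogonality
    intro μ
    set S : E := ∑ j : Fin (k₀ + 1), μ j • (Fin.snoc e₀ w : Fin (k₀ + 1) → E) j with hS
    set S₀ : E := ∑ j : Fin k₀, μ j.castSucc • e₀ j with hS₀
    have hsplit : S = S₀ + μ (Fin.last k₀) • w := by
      rw [hS, Fin.sum_univ_castSucc]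
      simp [Fin.snoc_castSucc, Fin.snoc_last]
      exact hS₀.symm
    have hS₀V₀ : S₀ ∈ V₀ :=
      Submodule.sum_mem _ fun j _ => V₀.smul_mem _ (hmem₀ j)
    have hlast : Real.sqrt t * (‖μ (Fin.last k₀)‖ * ‖w‖) ≤ ‖S‖ := by
      rw [hsplit, add_comm]
      exact hkey _ _ hS₀V₀
    intro i
    refine Fin.lastCases ?_ ?_ i
    · rw [Fin.snoc_last]
      calc t * (‖μ (Fin.last k₀)‖ * ‖w‖) ≤ Real.sqrt t * (‖μ (Fin.last k₀)‖ * ‖w‖) :=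
            mul_le_mul_of_nonneg_right htle (by positivity)
        _ ≤ ‖S‖ := hlast
    · intro i
      rw [Fin.snoc_castSucc]
      have h1 := horth₀ (fun j => μ j.castSucc) i
      have hub : ‖μ (Fin.last k₀) • w‖ ≤ ‖S‖ / Real.sqrt t := by
        rw [le_div_iff₀ ht0', norm_smul]
        nlinarith [hlast]
      have hSS : ‖S‖ ≤ ‖S‖ / Real.sqrt t := by
        rw [le_div_iff₀ ht0']
        nlinarith [norm_nonneg S]
      have h2 : ‖S₀‖ ≤ ‖S‖ / Real.sqrt t := by
        have hsub : S₀ = S - μ (Fin.last k₀) • w := by rw [hsplit]; abel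
        rw [hsub]
        exact (norm_sub_le_max' _ _).trans (max_le hSS hub)
      have h3 : Real.sqrt t * (‖μ i.castSucc‖ * ‖e₀ i‖) ≤ ‖S‖ / Real.sqrt t := le_trans h1 h2
      have h5 : Real.sqrt t * (‖S‖ / Real.sqrt t) = ‖S‖ := by field_simp
      have h4 := mul_le_mul_of_nonneg_left h3 ht0'.le
      rw [h5] at h4
      have h6 : t * (‖μ i.castSucc‖ * ‖e₀ i‖)
          = Real.sqrt t * (Real.sqrt t * (‖μ i.castSucc‖ * ‖e₀ i‖)) := by
        linear_combination (‖μ i.castSucc‖ * ‖e₀ i‖) * hts.symm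
      rw [h6]
      exact h4


lemma exists_adapted_basis :
    ∀ (d : ℕ) (t : ℝ), 0 < t → t < 1 → ∀ (V W : Submodule 𝕜 E), W ≤ V →
      FiniteDimensional 𝕜 V → Module.finrank 𝕜 V ≤ d →
      ∃ (k l : ℕ) (e : Fin k → E), l ≤ k ∧ (∀ i, e i ≠ 0) ∧ (∀ i, e i ∈ V) ∧
        (∀ i : Fin k, (i : ℕ) < l → e i ∈ W) ∧
        (W ≤ Submodule.span 𝕜 (Set.range fun i : Fin k => if (i : ℕ) < l then e i else 0)) ∧
        (V ≤ Submodule.span 𝕜 (Set.range e)) ∧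
        (∀ μ : Fin k → 𝕜, ∀ i, t * (‖μ i‖ * ‖e i‖) ≤ ‖∑ j, μ j • e j‖) := by
  intro d
  induction d with
  | zero =>
    intro t ht0 ht1 V W hWV hfd hd
    haveI := hfd
    have hV : V = ⊥ := Submodule.finrank_eq_zero.mp (Nat.le_zero.mp hd)
    refine ⟨0, 0, Fin.elim0, le_rfl, fun i => i.elim0, fun i => i.elim0, fun i => i.elim0,
      ?_, ?_, fun μ i => i.elim0⟩
    · have h1 : Set.range (fun i : Fin 0 => if (i : ℕ) < 0 then Fin.elim0 i else (0:E)) = ∅ :=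
        Set.range_eq_empty _
      rw [h1, Submodule.span_empty]
      exact hWV.trans hV.le
    · have h1 : Set.range (Fin.elim0 : Fin 0 → E) = ∅ := Set.range_eq_empty _
      rw [h1, Submodule.span_empty]
      exact hV.le
  | succ d ih =>
    intro t ht0 ht1 V W hWV hfd hd
    haveI := hfd
    by_cases hVbot : V = ⊥
    · refine ⟨0, 0, Fin.elim0, le_rfl, fun i => i.elim0, fun i => i.elim0, fun i => i.elim0,
        ?_, ?_, fun μ i => i.elim0⟩
      · have h1 : Set.range (fun i : Fin 0 => if (i : ℕ) < 0 then Fin.elim0 i else (0:E)) = ∅ :=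
          Set.range_eq_empty _
        rw [h1, Submodule.span_empty]
        exact hWV.trans hVbot.le
      · have h1 : Set.range (Fin.elim0 : Fin 0 → E) = ∅ := Set.range_eq_empty _
        rw [h1, Submodule.span_empty]
        exact hVbot.le
    haveI hVnt : Nontrivial ↥V := Submodule.nontrivial_iff_ne_bot.mpr hVbot
    have ht0' : 0 < Real.sqrt t := Real.sqrt_pos.mpr ht0
    have ht1' : Real.sqrt t < 1 := by
      have hts : Real.sqrt t * Real.sqrt t = t := Real.mul_self_sqrt ht0.le
      by_contra hc
      push_neg at hc
      nlinarith
    by_cases hVW : V ≤ W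
    · -- case W = V: all basis vectors may go into W
      obtain ⟨ψ, v, hv, -⟩ := exists_functional V (⊥ : Submodule 𝕜 ↥V) bot_ne_top
      set V₀ : Submodule 𝕜 E := (LinearMap.ker ψ).map V.subtype with hV₀
      have hV₀V : V₀ ≤ V := Submodule.map_subtype_le _ _
      have hker_ne : LinearMap.ker ψ ≠ ⊤ := by
        intro h
        exact hv (h ▸ Submodule.mem_top (x := v) : v ∈ LinearMap.ker ψ)
      have eqv := Submodule.equivMapOfInjective V.subtype (Submodule.injective_subtype V)
        (LinearMap.ker ψ)
      haveI hfd₀ : FiniteDimensional 𝕜 ↥V₀ := eqv.finiteDimensional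
      have hrank : Module.finrank 𝕜 ↥V₀ ≤ d := by
        have h1 : Module.finrank 𝕜 ↥V₀ = Module.finrank 𝕜 ↥(LinearMap.ker ψ) :=
          eqv.symm.finrank_eq
        have h2 : Module.finrank 𝕜 ↥(LinearMap.ker ψ) < Module.finrank 𝕜 ↥V :=
          Submodule.finrank_lt hker_ne
        omega
      obtain ⟨k₀, l₀, e₀, hlk₀, hne₀, hmem₀, hmemW₀, hspanW₀, hspanV₀, horth₀⟩ :=
        ih (Real.sqrt t) ht0' ht1' V₀ V₀ le_rfl hfd₀ hrank
      have hvV₀ : (v : E) ∉ V₀ := by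
        rintro ⟨u, hu, huv⟩
        have : u = v := Subtype.ext huv
        rw [this] at hu
        exact hv hu
      have hVspan : ∀ u ∈ V, ∃ c : 𝕜, u - c • (v : E) ∈ V₀ := by
        intro u hu
        refine ⟨ψ ⟨u, hu⟩ / ψ v,
          Submodule.mem_map.mpr ⟨⟨u, hu⟩ - (ψ ⟨u, hu⟩ / ψ v) • v, ?_, ?_⟩⟩
        · simp only [LinearMap.mem_ker, map_sub, map_smul, smul_eq_mul,
            div_mul_cancel₀ _ hv, sub_self]
        · simp
      obtain ⟨w, hw0, hwV, hspan, horth⟩ := extend_step t ht0 ht1 V V₀ hV₀V hfd₀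
        (v : E) v.2 hvV₀ hVspan k₀ e₀ hmem₀ hspanV₀ horth₀
      refine ⟨k₀ + 1, k₀ + 1, Fin.snoc e₀ w, le_rfl, ?_, ?_, ?_, ?_, hspan, horth⟩
      · intro i
        refine Fin.lastCases ?_ ?_ i
        · rw [Fin.snoc_last]; exact hw0
        · intro j; rw [Fin.snoc_castSucc]; exact hne₀ j
      · intro i
        refine Fin.lastCases ?_ ?_ i
        · rw [Fin.snoc_last]; exact hwV
        · intro j; rw [Fin.snoc_castSucc]; exact hV₀V (hmem₀ j)
      · intro i _
        refine hVW ?_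
        refine Fin.lastCases ?_ ?_ i
        · rw [Fin.snoc_last]; exact hwV
        · intro j; rw [Fin.snoc_castSucc]; exact hV₀V (hmem₀ j)
      · have hfn : (fun i : Fin (k₀ + 1) =>
              if (i : ℕ) < k₀ + 1 then (Fin.snoc e₀ w : Fin (k₀ + 1) → E) i else 0)
            = (Fin.snoc e₀ w : Fin (k₀ + 1) → E) := by
          funext i
          exact if_pos i.isLt
        rw [hfn]
        exact hWV.trans hspan
    · -- case W < V
      have hW''ne : W.comap V.subtype ≠ ⊤ := by
        intro h
        refine hVW fun u hu => ?_
        have : (⟨u, hu⟩ : ↥V) ∈ W.comap V.subtype := h ▸ Submodule.mem_top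
        exact this
      obtain ⟨ψ, v, hv, hker⟩ := exists_functional V (W.comap V.subtype) hW''ne
      set V₀ : Submodule 𝕜 E := (LinearMap.ker ψ).map V.subtype with hV₀
      have hV₀V : V₀ ≤ V := Submodule.map_subtype_le _ _
      have hker_ne : LinearMap.ker ψ ≠ ⊤ := by
        intro h
        exact hv (h ▸ Submodule.mem_top (x := v) : v ∈ LinearMap.ker ψ)
      have eqv := Submodule.equivMapOfInjective V.subtype (Submodule.injective_subtype V)
        (LinearMap.ker ψ)
      haveI hfd₀ : FiniteDimensional 𝕜 ↥V₀ := eqv.finiteDimensional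
      have hrank : Module.finrank 𝕜 ↥V₀ ≤ d := by
        have h1 : Module.finrank 𝕜 ↥V₀ = Module.finrank 𝕜 ↥(LinearMap.ker ψ) :=
          eqv.symm.finrank_eq
        have h2 : Module.finrank 𝕜 ↥(LinearMap.ker ψ) < Module.finrank 𝕜 ↥V :=
          Submodule.finrank_lt hker_ne
        omega
      have hWV₀ : W ≤ V₀ := by
        intro u hu
        have huV : u ∈ V := hWV hu
        exact ⟨⟨u, huV⟩, hker hu, rfl⟩
      obtain ⟨k₀, l₀, e₀, hlk₀, hne₀, hmem₀, hmemW₀, hspanW₀, hspanV₀, horth₀⟩ :=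
        ih (Real.sqrt t) ht0' ht1' V₀ W hWV₀ hfd₀ hrank
      have hvV₀ : (v : E) ∉ V₀ := by
        rintro ⟨u, hu, huv⟩
        have : u = v := Subtype.ext huv
        rw [this] at hu
        exact hv hu
      have hVspan : ∀ u ∈ V, ∃ c : 𝕜, u - c • (v : E) ∈ V₀ := by
        intro u hu
        refine ⟨ψ ⟨u, hu⟩ / ψ v,
          Submodule.mem_map.mpr ⟨⟨u, hu⟩ - (ψ ⟨u, hu⟩ / ψ v) • v, ?_, ?_⟩⟩
        · simp only [LinearMap.mem_ker, map_sub, map_smul, smul_eq_mul,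
            div_mul_cancel₀ _ hv, sub_self]
        · simp
      obtain ⟨w, hw0, hwV, hspan, horth⟩ := extend_step t ht0 ht1 V V₀ hV₀V hfd₀
        (v : E) v.2 hvV₀ hVspan k₀ e₀ hmem₀ hspanV₀ horth₀
      refine ⟨k₀ + 1, l₀, Fin.snoc e₀ w, hlk₀.trans (Nat.le_succ _), ?_, ?_, ?_, ?_,
        hspan, horth⟩
      · intro i
        refine Fin.lastCases ?_ ?_ i
        · rw [Fin.snoc_last]; exact hw0
        · intro j; rw [Fin.snoc_castSucc]; exact hne₀ j
      · intro i
        refine Fin.lastCases ?_ ?_ i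
        · rw [Fin.snoc_last]; exact hwV
        · intro j; rw [Fin.snoc_castSucc]; exact hV₀V (hmem₀ j)
      · intro i hi
        have hik : (i : ℕ) < k₀ := lt_of_lt_of_le hi hlk₀
        have hieq : i = Fin.castSucc ⟨(i : ℕ), hik⟩ := by
          ext; simp
        rw [hieq, Fin.snoc_castSucc]
        exact hmemW₀ _ hi
      · refine hspanW₀.trans (Submodule.span_le.mpr ?_)
        rintro z ⟨j, rfl⟩
        rw [SetLike.mem_coe]
        show (if (j : ℕ) < l₀ then e₀ j else 0) ∈ _
        by_cases hj : (j : ℕ) < l₀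
        · rw [if_pos hj]
          have hcast : (fun i : Fin (k₀ + 1) =>
                if (i : ℕ) < l₀ then (Fin.snoc e₀ w : Fin (k₀ + 1) → E) i else 0)
              (Fin.castSucc j) = e₀ j := by
            simp only [Fin.coe_castSucc, if_pos hj, Fin.snoc_castSucc]
          exact hcast ▸ Submodule.subset_span ⟨Fin.castSucc j, rfl⟩
        · rw [if_neg hj]
          exact Submodule.zero_mem _


end Stmt8Aux

namespace Stmt8Aux
section EvFun

variable {K : Type*} [CommSemiring K] {m : ℕ}

/-- Evaluation of the "coefficient vector supported on `T`" at a point `y'`. -/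
def evFun (T : Finset (Fin m →₀ ℕ)) (y' : Fin m → K) (v : {β // β ∈ T} → K) : K :=
  ∑ t : {β // β ∈ T}, v t * ∏ j, y' j ^ ((t : Fin m →₀ ℕ) j)

lemma evFun_sum_smul (T : Finset (Fin m →₀ ℕ)) (y' : Fin m → K) {k : ℕ}
    (c : Fin k → K) (v : Fin k → ({β // β ∈ T} → K)) :
    evFun T y' (∑ i, c i • v i) = ∑ i, c i * evFun T y' (v i) := by
  unfold evFun
  simp only [Finset.sum_apply, Pi.smul_apply, smul_eq_mul, Finset.sum_mul, Finset.mul_sum,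
    mul_assoc]
  exact Finset.sum_comm

lemma evFun_eq_eval (T : Finset (Fin m →₀ ℕ)) (y' : Fin m → K) (g : MvPolynomial (Fin m) K)
    (hg : g.support ⊆ T) : evFun T y' (fun t => g.coeff ↑t) = MvPolynomial.eval y' g := by
  unfold evFun
  rw [MvPolynomial.eval_eq']
  rw [Finset.sum_subset hg
    (fun β _ hβs => by rw [MvPolynomial.notMem_support_iff.mp hβs, zero_mul])]
  exact Finset.sum_coe_sort T (fun β => g.coeff β * ∏ j, y' j ^ β j)

lemma eval_monomial_sum (T : Finset (Fin m →₀ ℕ)) (y' : Fin m → K) (v : {β // β ∈ T} → K) :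
    MvPolynomial.eval y' (∑ t : {β // β ∈ T}, MvPolynomial.monomial (↑t : Fin m →₀ ℕ) (v t))
      = evFun T y' v := by
  rw [map_sum]
  unfold evFun
  refine Finset.sum_congr rfl fun t _ => ?_
  rw [MvPolynomial.eval_monomial, Finsupp.prod_pow]

/-- The subspace of coefficient vectors supported on `T` whose associated polynomial
vanishes on `Z'`. -/
def vanishSub (T : Finset (Fin m →₀ ℕ)) (Z' : Set (Fin m → K)) :
    Submodule K ({β // β ∈ T} → K) where
  carrier := {v | ∀ b ∈ Z', evFun T b v = 0}
  zero_mem' := fun b _ => by unfold evFun; simp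
  add_mem' := by
    intro a v ha hv b hb
    have h : evFun T b (a + v) = evFun T b a + evFun T b v := by
      unfold evFun
      simp [add_mul, Finset.sum_add_distrib]
    rw [h, ha b hb, hv b hb, add_zero]
  smul_mem' := by
    intro c v hv b hb
    have h : evFun T b (c • v) = c * evFun T b v := by
      unfold evFun
      simp [Finset.mul_sum, mul_assoc]
    rw [h, hv b hb, mul_zero]

lemma mem_vanishSub {T : Finset (Fin m →₀ ℕ)} {Z' : Set (Fin m → K)}
    {v : {β // β ∈ T} → K} : v ∈ vanishSub T Z' ↔ ∀ b ∈ Z', evFun T b v = 0 := Iff.rfl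

end EvFun


end Stmt8Aux

namespace Stmt8Aux

open Module Submodule Set

lemma key_bound {K : Type*} [NormedField K] [CompleteSpace K] [IsUltrametricDist K]
    (hnt : ∃ c : K, 1 < ‖c‖) {n m : ℕ} (Z : Set (Fin n → K)) (Z' : Set (Fin m → K))
    {x : Fin n → K} {y : Fin m → K} (hx : ∀ i, ‖x i‖ ≤ 1) (hy : ∀ j, ‖y j‖ ≤ 1)
    (f : MvPolynomial (Fin (n + m)) K)
    (hvan : ∀ a ∈ Z, ∀ b ∈ Z', MvPolynomial.eval (Fin.append a b) f = 0)
    (hcoef : ∀ d, ‖f.coeff d‖ ≤ 1) :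
    ‖MvPolynomial.eval (Fin.append x y) f‖ ≤
      2 * max (sSup (pdistSet x Z)) (sSup (pdistSet y Z')) := by
  classical
  letI : NontriviallyNormedField K := { ‹NormedField K› with non_trivial := hnt }
  haveI : IsUltrametricDist K := ‹_›
  set DX := sSup (pdistSet x Z) with hDX
  set DY := sSup (pdistSet y Z') with hDY
  have hDX0 : 0 ≤ DX := pdist_nonneg x Z
  have hDY0 : 0 ≤ DY := pdist_nonneg y Z'
  -- injectivity of the two embeddings
  have hinjX : Function.Injective (Fin.castAdd m : Fin n → Fin (n + m)) := by
    intro a b h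
    exact Fin.ext (by simpa using congrArg Fin.val h)
  have hinjY : Function.Injective (Fin.natAdd n : Fin m → Fin (n + m)) := by
    intro a b h
    have := congrArg Fin.val h
    simp only [Fin.coe_natAdd] at this
    exact Fin.ext (by omega)
  set gX : (Fin (n + m) →₀ ℕ) → (Fin n →₀ ℕ) :=
    fun u => Finsupp.comapDomain (Fin.castAdd m) u hinjX.injOn with hgX
  set gY : (Fin (n + m) →₀ ℕ) → (Fin m →₀ ℕ) :=
    fun u => Finsupp.comapDomain (Fin.natAdd n) u hinjY.injOn with hgY
  set A : Finset (Fin n →₀ ℕ) := f.support.image gX with hA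
  set T : Finset (Fin m →₀ ℕ) := f.support.image gY with hT
  set dpol : (Fin n →₀ ℕ) → MvPolynomial (Fin m) K := fun α =>
    ∑ u ∈ f.support.filter (fun u => gX u = α), MvPolynomial.monomial (gY u) (f.coeff u)
    with hdpol
  -- coefficients of dpol
  have hd_coeff : ∀ α β, (dpol α).coeff β =
      ∑ u ∈ f.support.filter (fun u => gX u = α),
        (if gY u = β then f.coeff u else 0) := by
    intro α β
    rw [hdpol]
    rw [MvPolynomial.coeff_sum]
    exact Finset.sum_congr rfl fun u _ => MvPolynomial.coeff_monomial _ _ _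
  have hd_coeff_norm : ∀ α β, ‖(dpol α).coeff β‖ ≤ 1 := by
    intro α β
    rw [hd_coeff]
    refine norm_finset_sum_le _ _ zero_le_one fun u _ => ?_
    split
    · exact hcoef u
    · simp
  have hdsupp : ∀ α, (dpol α).support ⊆ T := by
    intro α β hβ
    have h0 : (dpol α).coeff β ≠ 0 := MvPolynomial.mem_support_iff.mp hβ
    rw [hd_coeff] at h0
    obtain ⟨u, hu, hune⟩ := Finset.exists_ne_zero_of_sum_ne_zero h0
    have : gY u = β := by
      by_contra hc
      rw [if_neg hc] at hune
      exact hune rfl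
    rw [hT, ← this]
    exact Finset.mem_image_of_mem gY (Finset.mem_filter.mp hu).1
  -- the coefficient vectors
  set Dv : (Fin n →₀ ℕ) → ({β // β ∈ T} → K) := fun α t => (dpol α).coeff ↑t with hDv
  have hDnorm : ∀ α, ‖Dv α‖ ≤ 1 := by
    intro α
    rw [pi_norm_le_iff_of_nonneg zero_le_one]
    intro t
    exact hd_coeff_norm α ↑t
  -- the orthogonal basis
  haveI : IsUltrametricDist ({β // β ∈ T} → K) := pi_ultra
  obtain ⟨k, l, e, hlk, hne, hmemV, hmemW, hspanW, hspanV, horth⟩ :=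
    exists_adapted_basis (𝕜 := K) (E := {β // β ∈ T} → K)
      (Module.finrank K ({β // β ∈ T} → K)) (1/2) (by norm_num) (by norm_num)
      ⊤ (vanishSub T Z') le_top inferInstance (le_of_eq (finrank_top K _))
  have hrep : ∀ α, ∃ c : Fin k → K, ∑ i, c i • e i = Dv α := by
    intro α
    have h1 : Dv α ∈ Submodule.span K (Set.range e) := hspanV Submodule.mem_top
    rwa [mem_span_range_iff_exists_fun] at h1
  choose lam hlam using hrep
  have hepos : ∀ i, 0 < ‖e i‖ := fun i => norm_pos_iff.mpr (hne i)
  -- the polynomials q i and e' i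
  set qpol : Fin k → MvPolynomial (Fin n) K := fun i =>
    ∑ α ∈ A, MvPolynomial.monomial α (lam α i) with hqpol
  set epol : Fin k → MvPolynomial (Fin m) K := fun i =>
    ∑ t : {β // β ∈ T}, MvPolynomial.monomial (↑t : Fin m →₀ ℕ) (e i t) with hepol
  have heval_e : ∀ (y' : Fin m → K) i, MvPolynomial.eval y' (epol i) = evFun T y' (e i) :=
    fun y' i => eval_monomial_sum T y' (e i)
  have heval_q : ∀ (x' : Fin n → K) i,
      MvPolynomial.eval x' (qpol i) = ∑ α ∈ A, lam α i * ∏ j, x' j ^ α j := by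
    intro x' i
    rw [hqpol]
    rw [map_sum]
    refine Finset.sum_congr rfl fun α _ => ?_
    rw [MvPolynomial.eval_monomial, Finsupp.prod_pow]
  -- grouping identity
  have hgroup : ∀ (x' : Fin n → K) (y' : Fin m → K),
      MvPolynomial.eval (Fin.append x' y') f
        = ∑ α ∈ A, (∏ j, x' j ^ α j) * MvPolynomial.eval y' (dpol α) := by
    intro x' y'
    rw [MvPolynomial.eval_eq']
    rw [← Finset.sum_fiberwise_of_maps_to (g := gX) (t := A)
      (fun u hu => Finset.mem_image_of_mem gX hu)
      (fun u => f.coeff u * ∏ jj, Fin.append x' y' jj ^ u jj)]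
    refine Finset.sum_congr rfl fun α hα => ?_
    have heval : MvPolynomial.eval y' (dpol α)
        = ∑ u ∈ f.support.filter (fun u => gX u = α),
            f.coeff u * ∏ j, y' j ^ u (Fin.natAdd n j) := by
      rw [hdpol, map_sum]
      refine Finset.sum_congr rfl fun u _ => ?_
      rw [MvPolynomial.eval_monomial, Finsupp.prod_pow]
      refine congrArg _ (Finset.prod_congr rfl fun j _ => ?_)
      rw [hgY]
      rw [Finsupp.comapDomain_apply]
    rw [heval, Finset.mul_sum]
    refine Finset.sum_congr rfl fun u hu => ?_
    have hu' : gX u = α := (Finset.mem_filter.mp hu).2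
    have hprod : (∏ jj, Fin.append x' y' jj ^ u jj)
        = (∏ j, x' j ^ u (Fin.castAdd m j)) * ∏ j, y' j ^ u (Fin.natAdd n j) := by
      rw [Fin.prod_univ_add]
      congr 1
      · exact Finset.prod_congr rfl fun j _ => by rw [Fin.append_left]
      · exact Finset.prod_congr rfl fun j _ => by rw [Fin.append_right]
    have hxa : (∏ j, x' j ^ α j) = ∏ j, x' j ^ u (Fin.castAdd m j) := by
      rw [← hu', hgX]
      exact Finset.prod_congr rfl fun j _ => by rw [Finsupp.comapDomain_apply]
    rw [hprod, hxa]
    ring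
  -- the key identity
  have hkey : ∀ (x' : Fin n → K) (y' : Fin m → K),
      MvPolynomial.eval (Fin.append x' y') f
        = ∑ i, MvPolynomial.eval x' (qpol i) * evFun T y' (e i) := by
    intro x' y'
    rw [hgroup x' y']
    have h1 : ∀ α ∈ A, (∏ j, x' j ^ α j) * MvPolynomial.eval y' (dpol α)
        = ∑ i, lam α i * evFun T y' (e i) * (∏ j, x' j ^ α j) := by
      intro α _
      have h2 : MvPolynomial.eval y' (dpol α) = evFun T y' (Dv α) :=
        (evFun_eq_eval T y' (dpol α) (hdsupp α)).symm
      rw [h2, ← hlam α, evFun_sum_smul, Finset.mul_sum]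
      refine Finset.sum_congr rfl fun i _ => ?_
      ring
    rw [Finset.sum_congr rfl h1, Finset.sum_comm]
    refine Finset.sum_congr rfl fun i _ => ?_
    rw [heval_q, Finset.sum_mul]
    exact Finset.sum_congr rfl fun α _ => by ring
  -- coefficient bounds for qpol
  have hlam_bound : ∀ α i, ‖lam α i‖ ≤ 2 / ‖e i‖ := by
    intro α i
    have h1 := horth (lam α) i
    rw [hlam α] at h1
    have h2 : ‖Dv α‖ ≤ 1 := hDnorm α
    rw [le_div_iff₀ (hepos i)]
    nlinarith [norm_nonneg (lam α i), norm_nonneg (Dv α)]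
  have hqcoeff : ∀ i γ, ‖(qpol i).coeff γ‖ ≤ 2 / ‖e i‖ := by
    intro i γ
    have hM0 : (0:ℝ) ≤ 2 / ‖e i‖ := by positivity
    rw [hqpol]
    rw [MvPolynomial.coeff_sum]
    refine norm_finset_sum_le _ _ hM0 fun α _ => ?_
    rw [MvPolynomial.coeff_monomial]
    split
    · exact hlam_bound α i
    · simp [hM0]
  have hecoeff : ∀ i γ, ‖(epol i).coeff γ‖ ≤ ‖e i‖ := by
    intro i γ
    rw [hepol]
    rw [MvPolynomial.coeff_sum]
    refine norm_finset_sum_le _ _ (norm_nonneg _) fun t _ => ?_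
    rw [MvPolynomial.coeff_monomial]
    split
    · exact norm_le_pi_norm (e i) t
    · simp
  -- vanishing of qpol i on Z for i ≥ l
  have hqvan : ∀ (i : Fin k), l ≤ (i : ℕ) → ∀ a ∈ Z, MvPolynomial.eval a (qpol i) = 0 := by
    intro i hil a ha
    have hmem : (∑ i', MvPolynomial.eval a (qpol i') • e i') ∈ vanishSub T Z' := by
      rw [mem_vanishSub]
      intro b hb
      rw [evFun_sum_smul]
      rw [← hkey a b]
      exact hvan a ha b hb
    have hsp := hspanW hmem
    rw [mem_span_range_iff_exists_fun] at hsp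
    obtain ⟨ν, hν⟩ := hsp
    set μfun : Fin k → K :=
      fun i' => MvPolynomial.eval a (qpol i') - (if (i' : ℕ) < l then ν i' else 0) with hμfun
    have hzero : ∑ i', μfun i' • e i' = 0 := by
      have h2 : ∑ i' : Fin k, (if (i' : ℕ) < l then ν i' else 0) • e i'
          = ∑ i' : Fin k, ν i' • (if (i' : ℕ) < l then e i' else 0) := by
        refine Finset.sum_congr rfl fun i' _ => ?_
        by_cases h : (i' : ℕ) < l
        · rw [if_pos h, if_pos h]
        · rw [if_neg h, if_neg h, zero_smul, smul_zero]
      simp only [hμfun, sub_smul, Finset.sum_sub_distrib]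
      rw [h2, hν]
      exact sub_self _
    have h3 := horth μfun i
    rw [hzero, norm_zero] at h3
    have h4 : ‖μfun i‖ = 0 := by nlinarith [norm_nonneg (μfun i), hepos i]
    have h5 : μfun i = 0 := norm_eq_zero.mp h4
    have h6 : μfun i = MvPolynomial.eval a (qpol i) := by
      rw [hμfun]
      simp [if_neg (not_lt.mpr hil)]
    rw [h6] at h5
    exact h5
  -- final estimate
  rw [hkey x y]
  have hM0 : (0:ℝ) ≤ 2 * max DX DY := by positivity
  refine norm_finset_sum_le _ _ hM0 fun i _ => ?_
  rw [← heval_e y i, norm_mul]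
  by_cases hil : (i : ℕ) < l
  · -- e i vanishes on Z'
    have hvan_e : ∀ b ∈ Z', MvPolynomial.eval b (epol i) = 0 := by
      intro b hb
      rw [heval_e b i]
      exact (mem_vanishSub.mp (hmemW i hil)) b hb
    have hey : ‖MvPolynomial.eval y (epol i)‖ ≤ ‖e i‖ * DY :=
      norm_eval_le_mul_pdist (epol i) hvan_e (hecoeff i) hy
    have hex : ‖MvPolynomial.eval x (qpol i)‖ ≤ 2 / ‖e i‖ :=
      norm_eval_le (qpol i) x hx (hqcoeff i)
    calc ‖MvPolynomial.eval x (qpol i)‖ * ‖MvPolynomial.eval y (epol i)‖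
        ≤ (2 / ‖e i‖) * (‖e i‖ * DY) := by
          refine mul_le_mul hex hey (norm_nonneg _) (by positivity)
      _ = 2 * DY * (‖e i‖ / ‖e i‖) := by ring
      _ = 2 * DY := by rw [div_self (hepos i).ne', mul_one]
      _ ≤ 2 * max DX DY := by
          have := le_max_right DX DY
          nlinarith
  · -- qpol i vanishes on Z
    have hex : ‖MvPolynomial.eval x (qpol i)‖ ≤ (2 / ‖e i‖) * DX :=
      norm_eval_le_mul_pdist (qpol i) (hqvan i (not_lt.mp hil)) (hqcoeff i) hx
    have hey : ‖MvPolynomial.eval y (epol i)‖ ≤ ‖e i‖ :=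
      norm_eval_le (epol i) y hy (hecoeff i)
    calc ‖MvPolynomial.eval x (qpol i)‖ * ‖MvPolynomial.eval y (epol i)‖
        ≤ ((2 / ‖e i‖) * DX) * ‖e i‖ := by
          refine mul_le_mul hex hey (norm_nonneg _) (by positivity)
      _ = 2 * DX * (‖e i‖ / ‖e i‖) := by ring
      _ = 2 * DX := by rw [div_self (hepos i).ne', mul_one]
      _ ≤ 2 * max DX DY := by
          have := le_max_left DX DY
          nlinarith

end Stmt8Aux

namespace Stmt8Aux

lemma append_norm_le {K : Type*} [NormedField K] {n m : ℕ} {x : Fin n → K} {y : Fin m → K}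
    (hx : ∀ i, ‖x i‖ ≤ 1) (hy : ∀ j, ‖y j‖ ≤ 1) :
    ∀ j, ‖Fin.append x y j‖ ≤ 1 := by
  intro j
  refine Fin.addCases (fun i => ?_) (fun j' => ?_) j
  · rw [Fin.append_left]; exact hx i
  · rw [Fin.append_right]; exact hy j'

lemma pdist_le_append_left {K : Type*} [NormedField K] [IsUltrametricDist K] {n m : ℕ}
    (Z : Set (Fin n → K)) (Z' : Set (Fin m → K)) {x : Fin n → K} {y : Fin m → K}
    (hx : ∀ i, ‖x i‖ ≤ 1) (hy : ∀ j, ‖y j‖ ≤ 1) :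
    sSup (pdistSet x Z) ≤ sSup (pdistSet (Fin.append x y) (setProd Z Z')) := by
  have hinjX : Function.Injective (Fin.castAdd m : Fin n → Fin (n + m)) := by
    intro a b h
    exact Fin.ext (by simpa using congrArg Fin.val h)
  refine csSup_le_csSup (bddAbove_pdistSet (append_norm_le hx hy) _)
    ⟨0, zero_mem_pdistSet x Z⟩ ?_
  rintro r ⟨f, hvan, hc, rfl⟩
  refine ⟨MvPolynomial.rename (Fin.castAdd m) f, ?_, ?_, ?_⟩
  · intro z hz
    rw [MvPolynomial.eval_rename]
    exact hvan _ hz.1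
  · intro d
    by_cases hd : ∃ u : Fin n →₀ ℕ, u.mapDomain (Fin.castAdd m) = d
    · obtain ⟨u, rfl⟩ := hd
      rw [MvPolynomial.coeff_rename_mapDomain _ hinjX]
      exact hc u
    · rw [MvPolynomial.coeff_rename_eq_zero _ _ _ (fun u hu => absurd ⟨u, hu⟩ hd)]
      simp
  · have hax : (Fin.append x y) ∘ (Fin.castAdd m) = x := funext fun i => Fin.append_left x y i
    rw [MvPolynomial.eval_rename, hax]

lemma pdist_le_append_right {K : Type*} [NormedField K] [IsUltrametricDist K] {n m : ℕ}
    (Z : Set (Fin n → K)) (Z' : Set (Fin m → K)) {x : Fin n → K} {y : Fin m → K}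
    (hx : ∀ i, ‖x i‖ ≤ 1) (hy : ∀ j, ‖y j‖ ≤ 1) :
    sSup (pdistSet y Z') ≤ sSup (pdistSet (Fin.append x y) (setProd Z Z')) := by
  have hinjY : Function.Injective (Fin.natAdd n : Fin m → Fin (n + m)) := by
    intro a b h
    have := congrArg Fin.val h
    simp only [Fin.coe_natAdd] at this
    exact Fin.ext (by omega)
  refine csSup_le_csSup (bddAbove_pdistSet (append_norm_le hx hy) _)
    ⟨0, zero_mem_pdistSet y Z'⟩ ?_
  rintro r ⟨f, hvan, hc, rfl⟩
  refine ⟨MvPolynomial.rename (Fin.natAdd n) f, ?_, ?_, ?_⟩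
  · intro z hz
    rw [MvPolynomial.eval_rename]
    exact hvan _ hz.2
  · intro d
    by_cases hd : ∃ u : Fin m →₀ ℕ, u.mapDomain (Fin.natAdd n) = d
    · obtain ⟨u, rfl⟩ := hd
      rw [MvPolynomial.coeff_rename_mapDomain _ hinjY]
      exact hc u
    · rw [MvPolynomial.coeff_rename_eq_zero _ _ _ (fun u hu => absurd ⟨u, hu⟩ hd)]
      simp
  · have hay : (Fin.append x y) ∘ (Fin.natAdd n) = y := funext fun j => Fin.append_right x y j
    rw [MvPolynomial.eval_rename, hay]

end Stmt8Aux


/-- Let `p` be a prime, let `C` be (a field satisfying the defining properties of) `ℂ_p`,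
let `Z ⊆ C^n` and `Z' ⊆ C^m` be Zariski closed.  Then:
(a) there is `c ≥ 1`, depending only on `Z` and `Z'`, with
`dist_p((x,y), Z × Z') ≤ c·max{dist_p(x,Z), dist_p(y,Z')}` for all `x ∈ 𝒪_p^n`,
`y ∈ 𝒪_p^m`; and
(b) `max{dist_p(x,Z), dist_p(y,Z')} ≤ dist_p((x,y), Z × Z')` for all such `x, y`. -/
theorem stmt_8 (p : ℕ) [Fact p.Prime]
    (C : Type*) [NormedField C] [CompleteSpace C] [IsAlgClosed C] [IsUltrametricDist C]
    [Algebra ℚ_[p] C] (h_ext : ∀ q : ℚ_[p], ‖algebraMap ℚ_[p] C q‖ = ‖q‖)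
    (n m : ℕ) (Z : Set (Fin n → C)) (Z' : Set (Fin m → C))
    (hZ : IsZariskiClosed Z) (hZ' : IsZariskiClosed Z') :
    (∃ c : ℝ, 1 ≤ c ∧
      ∀ (x : Fin n → C) (y : Fin m → C), (∀ i, ‖x i‖ ≤ 1) → (∀ j, ‖y j‖ ≤ 1) →
        pDist (Fin.append x y) (setProd Z Z') ≤ c * max (pDist x Z) (pDist y Z')) ∧
    (∀ (x : Fin n → C) (y : Fin m → C), (∀ i, ‖x i‖ ≤ 1) → (∀ j, ‖y j‖ ≤ 1) →
      max (pDist x Z) (pDist y Z') ≤ pDist (Fin.append x y) (setProd Z Z')) := by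
  have hnt : ∃ c : C, 1 < ‖c‖ := by
    refine ⟨(algebraMap ℚ_[p] C (p : ℚ_[p]))⁻¹, ?_⟩
    rw [norm_inv, h_ext, Padic.norm_p, inv_inv]
    exact_mod_cast (Fact.out : p.Prime).one_lt
  constructor
  · refine ⟨2, one_le_two, fun x y hx hy => ?_⟩
    have hpd : pDist (Fin.append x y) (setProd Z Z')
        = sSup (Stmt8Aux.pdistSet (Fin.append x y) (setProd Z Z')) := rfl
    have hpx : pDist x Z = sSup (Stmt8Aux.pdistSet x Z) := rfl
    have hpy : pDist y Z' = sSup (Stmt8Aux.pdistSet y Z') := rfl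
    rw [hpd, hpx, hpy]
    have hM0 : (0:ℝ) ≤ 2 * max (sSup (Stmt8Aux.pdistSet x Z)) (sSup (Stmt8Aux.pdistSet y Z')) :=
      mul_nonneg (by norm_num) (le_max_of_le_left (Stmt8Aux.pdist_nonneg x Z))
    refine Real.sSup_le ?_ hM0
    rintro r ⟨f, hvan, hc, rfl⟩
    refine Stmt8Aux.key_bound hnt Z Z' hx hy f ?_ hc
    intro a ha b hb
    refine hvan (Fin.append a b) ⟨?_, ?_⟩
    · have h1 : (fun i => Fin.append a b (Fin.castAdd m i)) = a :=
        funext fun i => Fin.append_left a b i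
      rw [h1]; exact ha
    · have h2 : (fun j => Fin.append a b (Fin.natAdd n j)) = b :=
        funext fun j => Fin.append_right a b j
      rw [h2]; exact hb
  · intro x y hx hy
    exact max_le (Stmt8Aux.pdist_le_append_left Z Z' hx hy)
      (Stmt8Aux.pdist_le_append_right Z Z' hx hy)
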